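/- Let a_1,...,a_k ∈ ℝ^n be in conical position (each a_i is strictly separable from 0 and not in the positive hull of the others) and suppose all a_i lie in an open halfspace {a : ⟨n⃗, a⟩ > 0}. Let P(a) denote the radial projection of a onto the hyperplane {a : ⟨n⃗, a⟩ = 1}, i.e., P(a) = a / ⟨n⃗, a⟩. Then P(a_1),...,P(a_k) are in convex position: no P(a_i) lies in the convex hull of the others. -/
import Mathlib


local notation "⟪" x ", " y "⟫_ℝ" => @inner ℝ _ _ x y

theorem stmt12 {n k : ℕ} (a : Fin k → EuclideanSpace ℝ (Fin n))
    (nv : EuclideanSpace ℝ (Fin n)) (hside : ∀ i, 0 < ⟪nv, a i⟫_ℝ)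
    (hconical : ∀ i, ¬ ∃ lam : Fin k → ℝ, (∀ j, 0 ≤ lam j) ∧
      a i = ∑ j ∈ Finset.univ.erase i, lam j • a j) :
    ∀ i, (⟪nv, a i⟫_ℝ)⁻¹ • a i ∉
      convexHull ℝ ((fun j => (⟪nv, a j⟫_ℝ)⁻¹ • a j) '' {j : Fin k | j ≠ i}) := by
  classical
  intro i h
  rw [convexHull_eq] at h
  obtain ⟨ι, t, w, z, hw0, hw1, hz, hx⟩ := h
  rw [Finset.centerMass_eq_of_sum_1 _ _ hw1] at hx
  -- choose for each s ∈ t an index J s ≠ i with z s = P (a (J s))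
  have hJ : ∀ s ∈ t, ∃ j : Fin k, j ≠ i ∧ z s = (⟪nv, a j⟫_ℝ)⁻¹ • a j := by
    intro s hs
    obtain ⟨j, hj, hzj⟩ := hz s hs
    exact ⟨j, hj, hzj.symm⟩
  set J : ι → Fin k := fun s =>
    if hs : ∃ j : Fin k, j ≠ i ∧ z s = (⟪nv, a j⟫_ℝ)⁻¹ • a j then hs.choose else i with hJdef
  have hJne : ∀ s ∈ t, J s ≠ i := by
    intro s hs
    have h' := hJ s hs
    simp only [hJdef, dif_pos h']
    exact h'.choose_spec.1
  have hJz : ∀ s ∈ t, z s = (⟪nv, a (J s)⟫_ℝ)⁻¹ • a (J s) := by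
    intro s hs
    have h' := hJ s hs
    simp only [hJdef, dif_pos h']
    exact h'.choose_spec.2
  set c : ι → ℝ := fun s => w s * (⟪nv, a i⟫_ℝ * (⟪nv, a (J s)⟫_ℝ)⁻¹) with hc
  have hc0 : ∀ s ∈ t, 0 ≤ c s := by
    intro s hs
    exact mul_nonneg (hw0 s hs) (mul_nonneg (hside i).le (inv_nonneg.mpr (hside _).le))
  have key : a i = ∑ s ∈ t, c s • a (J s) := by
    have hi : (0:ℝ) < ⟪nv, a i⟫_ℝ := hside i
    have : a i = ⟪nv, a i⟫_ℝ • ((⟪nv, a i⟫_ℝ)⁻¹ • a i) := by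
      rw [smul_smul, mul_inv_cancel₀ hi.ne', one_smul]
    rw [this, ← hx, Finset.smul_sum]
    refine Finset.sum_congr rfl ?_
    intro s hs
    rw [hJz s hs, hc, smul_smul, smul_smul]
    ring_nf
  apply hconical i
  refine ⟨fun j => ∑ s ∈ t.filter (fun s => J s = j), c s, ?_, ?_⟩
  · intro j
    exact Finset.sum_nonneg fun s hs => hc0 s (Finset.mem_filter.mp hs).1
  · have hfib : ∑ j : Fin k, ∑ s ∈ t.filter (fun s => J s = j), c s • a j
        = ∑ s ∈ t, c s • a (J s) := by
      rw [← Finset.sum_fiberwise t (fun s => J s) (fun s => c s • a (J s))]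
      refine Finset.sum_congr rfl fun j _ => Finset.sum_congr rfl fun s hs => ?_
      rw [(Finset.mem_filter.mp hs).2]
    have hifiber : t.filter (fun s => J s = i) = ∅ := by
      rw [Finset.filter_eq_empty_iff]
      intro s hs
      exact hJne s hs
    calc a i = ∑ s ∈ t, c s • a (J s) := key
      _ = ∑ j : Fin k, ∑ s ∈ t.filter (fun s => J s = j), c s • a j := hfib.symm
      _ = ∑ j ∈ Finset.univ.erase i, ∑ s ∈ t.filter (fun s => J s = j), c s • a j := by
          rw [← Finset.sum_erase_add _ _ (Finset.mem_univ i), hifiber]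
          simp
      _ = ∑ j ∈ Finset.univ.erase i,
            (∑ s ∈ t.filter (fun s => J s = j), c s) • a j := by
          refine Finset.sum_congr rfl fun j _ => ?_
          rw [Finset.sum_smul]
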